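/- Let G be an ICC group whose conjugation action on G ∖ {1} has spectral gap (i.e. G is non-inner amenable, witnessed by the permutation representation of G on ℓ²(G∖{1})). Then the diagonal conjugation action of G on the set G^ℕ ∖ {1} (the full direct power minus the identity sequence) also has spectral gap; consequently, any group Γ with G ≤ Γ ≤ G^ℕ (with G embedded diagonally) is non-inner amenable. -/

import Mathlib

/-- A unitary representation has spectral gap if some finite set of group elements uniformly
moves every vector. -/
def RepGap {G : Type*} [Group G] {H : Type*} [NormedAddCommGroup H]
    [InnerProductSpace ℂ H] [CompleteSpace H]
    (π : G →* unitary (H →L[ℂ] H)) : Prop :=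
  ∃ (F : Finset G) (ε : ℝ), 0 < ε ∧
    ∀ ξ : H, ∃ g ∈ F, ε * ‖ξ‖ ≤ ‖(π g : H →L[ℂ] H) ξ - ξ‖

/-- The permutation representation of `G` on `ℓ²(X)` associated to an action of `G` on `X`
has spectral gap. -/
def PermRepGap {G : Type*} [Group G] {X : Type*} (act : G → X → X) : Prop :=
  ∀ π : G →* unitary (lp (fun _ : X => ℂ) 2 →L[ℂ] lp (fun _ : X => ℂ) 2),
    (∀ (g : G) (ξ : lp (fun _ : X => ℂ) 2) (x : X),
        ((π g : lp (fun _ : X => ℂ) 2 →L[ℂ] lp (fun _ : X => ℂ) 2) ξ) x = ξ (act g⁻¹ x)) →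
    RepGap π

/-- Conjugation action on the set of nontrivial elements of a group. -/
def conjNI {G : Type*} [Group G] (g : G) (x : {h : G // h ≠ 1}) : {h : G // h ≠ 1} :=
  ⟨g * x.1 * g⁻¹, fun hc => x.2 (by
    have h1 : x.1 = g⁻¹ * (g * x.1 * g⁻¹) * g := by group
    rw [h1, hc]; group)⟩

noncomputable section

namespace Stmt16

open scoped ENNReal Classical

variable {X Y : Type*}

local notation "ℓ²(" X ")" => lp (fun _ : X => ℂ) 2

private lemma tpos : (0:ℝ) < (2 : ℝ≥0∞).toReal := by norm_num

private lemma memℓp_comp {f : X → ℂ} (hf : Memℓp f 2) {g : Y → X}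
    (hg : Function.Injective g) : Memℓp (fun y => f (g y)) 2 :=
  memℓp_gen ((hf.summable tpos).comp_injective hg)

def res (φ : X → Y) (f : ℓ²(X)) (y : Y) : ℓ²({x : X // φ x = y}) :=
  ⟨fun x => f x.1, memℓp_comp (lp.memℓp f) Subtype.val_injective⟩

@[simp] lemma res_apply (φ : X → Y) (f : ℓ²(X)) (y : Y) (x : {x : X // φ x = y}) :
    res φ f y x = f x.1 := rfl

lemma res_sub (φ : X → Y) (f g : ℓ²(X)) (y : Y) :
    res φ (f - g) y = res φ f y - res φ g y := rfl

lemma res_norm_pow (φ : X → Y) (f : ℓ²(X)) (y : Y) :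
    ‖res φ f y‖ ^ (2 : ℝ≥0∞).toReal
      = ∑' x : {x : X // φ x = y}, ‖f x.1‖ ^ (2 : ℝ≥0∞).toReal :=
  lp.norm_rpow_eq_tsum tpos (res φ f y)

lemma summable_res (φ : X → Y) (f : ℓ²(X)) :
    Summable (fun y => ‖res φ f y‖ ^ (2 : ℝ≥0∞).toReal) ∧
      ∑' y, ‖res φ f y‖ ^ (2 : ℝ≥0∞).toReal = ‖f‖ ^ (2 : ℝ≥0∞).toReal := by
  have hF : Summable (fun x : X => ‖f x‖ ^ (2 : ℝ≥0∞).toReal) := (lp.memℓp f).summable tpos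
  have h0 : ∀ p : (Σ y : Y, {x : X // φ x = y}),
      0 ≤ ‖f p.2.1‖ ^ (2 : ℝ≥0∞).toReal :=
    fun p => Real.rpow_nonneg (norm_nonneg _) _
  have hFs : Summable (fun p : (Σ y : Y, {x : X // φ x = y}) => ‖f p.2.1‖ ^ (2 : ℝ≥0∞).toReal) :=
    ((Equiv.sigmaFiberEquiv φ).summable_iff
      (f := fun x : X => ‖f x‖ ^ (2 : ℝ≥0∞).toReal)).mpr hF
  have hout := ((summable_sigma_of_nonneg h0).mp hFs).2
  constructor
  · exact hout.congr fun y => (res_norm_pow φ f y).symm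
  · calc ∑' y, ‖res φ f y‖ ^ (2 : ℝ≥0∞).toReal
        = ∑' (y) (x : {x : X // φ x = y}), ‖f x.1‖ ^ (2 : ℝ≥0∞).toReal :=
          tsum_congr fun y => res_norm_pow φ f y
      _ = ∑' p : (Σ y : Y, {x : X // φ x = y}), ‖f p.2.1‖ ^ (2 : ℝ≥0∞).toReal :=
          hFs.tsum_sigma.symm
      _ = ∑' x : X, ‖f x‖ ^ (2 : ℝ≥0∞).toReal :=
          (Equiv.sigmaFiberEquiv φ).tsum_eq (fun x : X => ‖f x‖ ^ (2 : ℝ≥0∞).toReal)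
      _ = ‖f‖ ^ (2 : ℝ≥0∞).toReal := (lp.norm_rpow_eq_tsum tpos f).symm

def liftL2 (φ : X → Y) (f : ℓ²(X)) : ℓ²(Y) :=
  ⟨fun y => ((‖res φ f y‖ : ℝ) : ℂ), by
    apply memℓp_gen
    refine (summable_res φ f).1.congr fun y => ?_
    simp [abs_of_nonneg (norm_nonneg _)]⟩

@[simp] lemma liftL2_apply (φ : X → Y) (f : ℓ²(X)) (y : Y) :
    liftL2 φ f y = ((‖res φ f y‖ : ℝ) : ℂ) := rfl

lemma norm_liftL2 (φ : X → Y) (f : ℓ²(X)) : ‖liftL2 φ f‖ = ‖f‖ := by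
  rw [lp.norm_eq_tsum_rpow tpos, lp.norm_eq_tsum_rpow tpos f]
  rw [← lp.norm_rpow_eq_tsum tpos f, ← (summable_res φ f).2]
  congr 1
  refine tsum_congr fun y => ?_
  simp [abs_of_nonneg (norm_nonneg _)]

private lemma rpow_le_norm {a b : ℝ} (ha : 0 ≤ a) (hb : 0 ≤ b)
    (h : a ^ (2 : ℝ≥0∞).toReal ≤ b ^ (2 : ℝ≥0∞).toReal) : a ≤ b := by
  have h2 : (2 : ℝ≥0∞).toReal = ((2 : ℕ) : ℝ) := by norm_num
  rw [h2, Real.rpow_natCast, Real.rpow_natCast] at h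
  exact (pow_le_pow_iff_left₀ ha hb (by norm_num)).mp h

lemma key (φ : X → Y) (u ξ : ℓ²(X)) (η η' : ℓ²(Y))
    (hη : ∀ y, η y = ((‖res φ ξ y‖ : ℝ) : ℂ))
    (hη' : ∀ y, η' y = ((‖res φ u y‖ : ℝ) : ℂ)) :
    ‖η' - η‖ ≤ ‖u - ξ‖ := by
  refine rpow_le_norm (norm_nonneg _) (norm_nonneg _) ?_
  rw [lp.norm_rpow_eq_tsum tpos (η' - η), ← (summable_res φ (u - ξ)).2]
  refine Summable.tsum_le_tsum ?_ ((lp.memℓp (η' - η)).summable tpos) (summable_res φ (u - ξ)).1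
  intro y
  have hpt : ‖(η' - η) y‖ ≤ ‖res φ (u - ξ) y‖ := by
    rw [lp.coeFn_sub, Pi.sub_apply, hη, hη', res_sub, ← Complex.ofReal_sub,
      Complex.norm_real]
    exact abs_norm_sub_norm_le _ _
  exact Real.rpow_le_rpow (norm_nonneg _) hpt (le_of_lt tpos)

lemma res_norm_reindex (φ : X → Y) (ξ u : ℓ²(X)) {y y' : Y}
    (E : {x : X // φ x = y} ≃ {x : X // φ x = y'})
    (hu : ∀ x : {x : X // φ x = y}, u x.1 = ξ (E x).1) :
    ‖res φ ξ y'‖ = ‖res φ u y‖ := by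
  rw [lp.norm_eq_tsum_rpow tpos, lp.norm_eq_tsum_rpow tpos]
  congr 1
  rw [← E.tsum_eq (fun x : {x : X // φ x = y'} => ‖(res φ ξ y') x‖ ^ (2 : ℝ≥0∞).toReal)]
  exact tsum_congr fun x => by rw [res_apply, res_apply, hu]

/-! ### permutation representations -/

def lpCongrLi (e : X ≃ Y) : ℓ²(X) ≃ₗᵢ[ℂ] ℓ²(Y) where
  toLinearEquiv :=
    { toFun := fun f => ⟨fun y => f (e.symm y), memℓp_comp (lp.memℓp f) e.symm.injective⟩
      map_add' := fun f g => rfl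
      map_smul' := fun c f => rfl
      invFun := fun f => ⟨fun x => f (e x), memℓp_comp (lp.memℓp f) e.injective⟩
      left_inv := fun f => Subtype.ext (funext fun x => by simp)
      right_inv := fun f => Subtype.ext (funext fun y => by simp) }
  norm_map' := fun f => by
    rw [lp.norm_eq_tsum_rpow tpos, lp.norm_eq_tsum_rpow tpos f]
    congr 1
    exact e.symm.tsum_eq (fun x : X => ‖f x‖ ^ (2 : ℝ≥0∞).toReal)

@[simp] lemma lpCongrLi_apply (e : X ≃ Y) (f : ℓ²(X)) (y : Y) :
    lpCongrLi e f y = f (e.symm y) := rfl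

lemma lpCongrLi_mul (e₁ e₂ : Equiv.Perm X) :
    lpCongrLi (e₁ * e₂) = lpCongrLi e₁ * lpCongrLi e₂ :=
  LinearIsometryEquiv.ext fun f => Subtype.ext (funext fun _ => rfl)

def permL2Hom : Equiv.Perm X →* (ℓ²(X) ≃ₗᵢ[ℂ] ℓ²(X)) :=
  MonoidHom.mk' (fun e => lpCongrLi e) lpCongrLi_mul

def permRep {K : Type*} [Group K] (c : K →* Equiv.Perm X) :
    K →* unitary (ℓ²(X) →L[ℂ] ℓ²(X)) :=
  ((Unitary.linearIsometryEquiv (𝕜 := ℂ) (H := ℓ²(X))).symm.toMonoidHom).comp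
    (permL2Hom.comp c)

lemma permRep_apply {K : Type*} [Group K] (c : K →* Equiv.Perm X) (k : K)
    (ξ : ℓ²(X)) (x : X) :
    (permRep c k : ℓ²(X) →L[ℂ] ℓ²(X)) ξ x = ξ (c k⁻¹ x) := by
  rw [map_inv c]
  rfl

def conjPermHom (H : Type*) [Group H] : H →* Equiv.Perm {h : H // h ≠ 1} :=
  MonoidHom.mk'
    (fun g => ⟨conjNI g, conjNI g⁻¹,
      fun x => Subtype.ext (by simp only [conjNI]; group),
      fun x => Subtype.ext (by simp only [conjNI]; group)⟩)
    (by
      intro g₁ g₂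
      apply Equiv.ext
      intro x
      apply Subtype.ext
      show (g₁ * g₂) * x.1 * (g₁ * g₂)⁻¹ = g₁ * (g₂ * x.1 * g₂⁻¹) * g₁⁻¹
      group)

lemma conjNI_left_inv {H : Type*} [Group H] (γ : H) (x : {h : H // h ≠ 1}) :
    conjNI γ⁻¹ (conjNI γ x) = x := Subtype.ext (by simp only [conjNI]; group)

lemma conjNI_right_inv {H : Type*} [Group H] (γ : H) (x : {h : H // h ≠ 1}) :
    conjNI γ (conjNI γ⁻¹ x) = x := Subtype.ext (by simp only [conjNI]; group)

/-! ### first nontrivial coordinate -/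

variable {G K H : Type*} [Group G] [Group K] [Group H]

lemma exists_ne_coord (e : H →* (ℕ → G)) (he : Function.Injective e)
    (x : {h : H // h ≠ 1}) : ∃ n, e x.1 n ≠ 1 := by
  by_contra h
  push_neg at h
  exact x.2 (he (by rw [map_one]; funext n; exact h n))

def firstCoord (e : H →* (ℕ → G)) (he : Function.Injective e)
    (x : {h : H // h ≠ 1}) : {g : G // g ≠ 1} :=
  ⟨e x.1 (Nat.find (exists_ne_coord e he x)), Nat.find_spec (exists_ne_coord e he x)⟩

private lemma find_iff {p q : ℕ → Prop} [DecidablePred p] [DecidablePred q]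
    (h : ∀ n, p n ↔ q n) (hp : ∃ n, p n) (hq : ∃ n, q n) : Nat.find hp = Nat.find hq :=
  le_antisymm (Nat.find_le ((h _).mpr (Nat.find_spec hq)))
    (Nat.find_le ((h _).mp (Nat.find_spec hp)))

lemma firstCoord_equivar (e : H →* (ℕ → G)) (he : Function.Injective e) (g : G) (γ : H)
    (hγ : e γ = fun _ => g) (x : {h : H // h ≠ 1}) :
    firstCoord e he (conjNI γ x) = conjNI g (firstCoord e he x) := by
  have hval : ∀ n, e (γ * x.1 * γ⁻¹) n = g * e x.1 n * g⁻¹ := by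
    intro n
    rw [map_mul, map_mul, map_inv, hγ]
    rfl
  have hiff : ∀ n, (e (conjNI γ x).1 n ≠ 1) ↔ (e x.1 n ≠ 1) := by
    intro n
    show (e (γ * x.1 * γ⁻¹) n ≠ 1) ↔ _
    rw [hval]
    constructor
    · intro h h1
      exact h (by rw [h1]; group)
    · intro h h1
      apply h
      have := congrArg (fun z => g⁻¹ * z * g) h1
      simpa [mul_assoc] using this
  apply Subtype.ext
  show e (γ * x.1 * γ⁻¹) (Nat.find _) = g * e x.1 (Nat.find _) * g⁻¹
  rw [find_iff hiff (exists_ne_coord e he (conjNI γ x)) (exists_ne_coord e he x), hval]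

/-! ### the transfer lemma -/

set_option maxHeartbeats 2000000 in
lemma transfer (a : K →* H) (ι : G → K) (e : H →* (ℕ → G)) (he : Function.Injective e)
    (hcomm : ∀ g : G, e (a (ι g)) = fun _ => g)
    (hgap : PermRepGap (fun g : G => conjNI g)) :
    PermRepGap (fun k : K => conjNI (a k)) := by
  intro π hπ
  have hρ : ∀ (g : G) (η : ℓ²({h : G // h ≠ 1})) (y : {h : G // h ≠ 1}),
      (permRep (conjPermHom G) g : ℓ²({h : G // h ≠ 1}) →L[ℂ] ℓ²({h : G // h ≠ 1})) η y
        = η (conjNI g⁻¹ y) := by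
    intro g η y
    exact permRep_apply (conjPermHom G) g η y
  obtain ⟨F, ε, hε, hF⟩ := hgap (permRep (conjPermHom G)) hρ
  refine ⟨F.image ι, ε, hε, ?_⟩
  intro ξ
  obtain ⟨g, hgF, hineq⟩ := hF (liftL2 (firstCoord e he) ξ)
  refine ⟨ι g, Finset.mem_image_of_mem ι hgF, ?_⟩
  set φ : {h : H // h ≠ 1} → {g : G // g ≠ 1} := firstCoord e he with hφdef
  set u : ℓ²({h : H // h ≠ 1}) :=
    (π (ι g) : ℓ²({h : H // h ≠ 1}) →L[ℂ] ℓ²({h : H // h ≠ 1})) ξ with hudef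
  have hu : ∀ x, u x = ξ (conjNI ((a (ι g))⁻¹) x) := by
    intro x
    rw [hudef, hπ (ι g) ξ x]
    simp only [map_inv]
  have heg : e ((a (ι g))⁻¹) = fun _ => g⁻¹ := by
    rw [map_inv, hcomm]
    funext n
    simp
  have heg' : e (a (ι g)) = fun _ => g := hcomm g
  have hfwd : ∀ x : {h : H // h ≠ 1}, φ (conjNI ((a (ι g))⁻¹) x) = conjNI g⁻¹ (φ x) :=
    fun x => firstCoord_equivar e he g⁻¹ ((a (ι g))⁻¹) heg x
  have hbwd : ∀ x : {h : H // h ≠ 1}, φ (conjNI (a (ι g)) x) = conjNI g (φ x) :=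
    fun x => firstCoord_equivar e he g (a (ι g)) heg' x
  have hη' : ∀ y, ((permRep (conjPermHom G) g :
        ℓ²({h : G // h ≠ 1}) →L[ℂ] ℓ²({h : G // h ≠ 1})) (liftL2 φ ξ)) y
      = ((‖res φ u y‖ : ℝ) : ℂ) := by
    intro y
    rw [hρ g (liftL2 φ ξ) y, liftL2_apply]
    congr 1
    refine res_norm_reindex φ ξ u
      (⟨fun x => ⟨conjNI ((a (ι g))⁻¹) x.1, by rw [hfwd, x.2]⟩,
        fun x => ⟨conjNI (a (ι g)) x.1, by rw [hbwd, x.2, conjNI_right_inv]⟩,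
        fun x => Subtype.ext (conjNI_right_inv _ _),
        fun x => Subtype.ext (conjNI_left_inv (a (ι g)) x.1)⟩)
      (fun x => hu x.1)
  calc ε * ‖ξ‖ = ε * ‖liftL2 φ ξ‖ := by rw [norm_liftL2]
    _ ≤ ‖(permRep (conjPermHom G) g :
          ℓ²({h : G // h ≠ 1}) →L[ℂ] ℓ²({h : G // h ≠ 1})) (liftL2 φ ξ) - liftL2 φ ξ‖ := hineq
    _ ≤ ‖u - ξ‖ := key φ u ξ (liftL2 φ ξ) _ (fun y => rfl) hη'

end Stmt16

end

/-- If `G` is ICC and its conjugation action on `G ∖ {1}` has spectral gap (non-inner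
amenability), then the diagonal conjugation action of `G` on `G^ℕ ∖ {1}` has spectral gap;
consequently every group `Γ` with `G ≤ Γ ≤ G^ℕ` (with `G` diagonally embedded) is non-inner
amenable. -/
theorem stmt16 {G : Type*} [Group G]
    (hicc : ∀ g : G, g ≠ 1 → (Set.range fun x : G => x * g * x⁻¹).Infinite)
    (hgap : PermRepGap (fun g : G => conjNI g)) :
    PermRepGap (fun (g : G) (x : {h : (ℕ → G) // h ≠ 1}) => conjNI (fun _ => g) x) ∧
    ∀ Γ : Subgroup (ℕ → G), (∀ g : G, (fun _ => g) ∈ Γ) →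
      PermRepGap (fun (γ : Γ) (x : {h : Γ // h ≠ 1}) => conjNI γ x) := by
  constructor
  · exact Stmt16.transfer (Pi.constMonoidHom ℕ G) (fun g => g) (MonoidHom.id (ℕ → G))
      (fun _ _ h => h) (fun g => rfl) hgap
  · intro Γ hΓ
    exact Stmt16.transfer (MonoidHom.id Γ) (fun g => (⟨fun _ => g, hΓ g⟩ : Γ)) Γ.subtype
      Subtype.val_injective (fun g => rfl) hgap
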